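/- Let G_λ be a Young subgroup of S_r with direct product decomposition G_λ = ∏_i G_{λ_i} over the λ-blocks, let ν be a composition, and let α be a 0-preserving map of {0,...,r}. Define G_R(λ,α,ν) = {σ ∈ G_λ : ∃π ∈ G_ν, σα = απ} and G_{R,i}(λ,α,ν) = G_R(λ,α,ν) ∩ G_{λ_i}. Then G_R(λ,α,ν) = ∏_i G_{R,i}(λ,α,ν). -/

import Mathlib

/-- The label of the block of the composition `l` containing `k`:
`0` for `k = 0`, the (1-based) index of the consecutive `l`-block containing
`k` for `1 ≤ k ≤ l.sum`, and `l.length + 1` for `k > l.sum`. -/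
def blockOf (l : List ℕ) (k : ℕ) : ℕ :=
  if k = 0 then 0
  else ((Finset.range l.length).filter (fun i => (l.take (i + 1)).sum < k)).card + 1

/-- The Young subgroup of the composition `l`, as the set of permutations of `ℕ`
preserving every `l`-block (and fixing `0` and everything beyond `l.sum`). -/
def youngSet (l : List ℕ) : Set (Equiv.Perm ℕ) :=
  {σ | (∀ k, blockOf l (σ k) = blockOf l k) ∧ ∀ k, l.sum < k → σ k = k}

lemma blockOf_eq_zero_iff (l : List ℕ) (k : ℕ) : blockOf l k = 0 ↔ k = 0 := by
  unfold blockOf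
  split <;> simp_all

lemma sum_take_le (l : List ℕ) (n : ℕ) : (l.take n).sum ≤ l.sum := by
  conv_rhs => rw [← List.take_append_drop n l]
  rw [List.sum_append]
  exact Nat.le_add_right _ _

lemma blockOf_of_gt (l : List ℕ) (k : ℕ) (h : l.sum < k) : blockOf l k = l.length + 1 := by
  unfold blockOf
  rw [if_neg (by omega)]
  congr 1
  rw [Finset.filter_true_of_mem, Finset.card_range]
  intro i _
  exact lt_of_le_of_lt (sum_take_le l (i + 1)) h

lemma blockOf_le_length (l : List ℕ) (k : ℕ) (hk : k ≠ 0) (h : k ≤ l.sum) :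
    blockOf l k ≤ l.length := by
  unfold blockOf
  rw [if_neg hk]
  have hlen : 0 < l.length := by
    rcases l with _ | ⟨a, l⟩
    · simp at h; omega
    · simp
  have hnot : (l.length - 1) ∉
      (Finset.range l.length).filter (fun i => (l.take (i + 1)).sum < k) := by
    simp only [Finset.mem_filter, Finset.mem_range, not_and]
    intro _
    have ht : l.take (l.length - 1 + 1) = l := by
      rw [Nat.sub_add_cancel hlen]
      exact List.take_length
    rw [ht]
    omega
  have hss : (Finset.range l.length).filter (fun i => (l.take (i + 1)).sum < k)
      ⊂ Finset.range l.length := by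
    rw [Finset.ssubset_iff_of_subset (Finset.filter_subset _ _)]
    exact ⟨l.length - 1, Finset.mem_range.mpr (by omega), hnot⟩
  have := Finset.card_lt_card hss
  rw [Finset.card_range] at this
  omega

lemma young_one (l : List ℕ) : (1 : Equiv.Perm ℕ) ∈ youngSet l :=
  ⟨fun _ => rfl, fun _ _ => rfl⟩

lemma young_mul {l : List ℕ} {a b : Equiv.Perm ℕ} (ha : a ∈ youngSet l)
    (hb : b ∈ youngSet l) : a * b ∈ youngSet l := by
  refine ⟨fun k => ?_, fun k hk => ?_⟩
  · simp only [Equiv.Perm.mul_apply]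
    rw [ha.1, hb.1]
  · simp only [Equiv.Perm.mul_apply]
    rw [hb.2 k hk, ha.2 k hk]

lemma young_inv {l : List ℕ} {a : Equiv.Perm ℕ} (ha : a ∈ youngSet l) :
    a⁻¹ ∈ youngSet l := by
  refine ⟨fun k => ?_, fun k hk => ?_⟩
  · have e : a (a⁻¹ k) = k := Equiv.apply_symm_apply a k
    conv_rhs => rw [← e]
    rw [ha.1]
  · have h := ha.2 k hk
    conv_lhs => rw [← h]
    simp

lemma young_le {l : List ℕ} {a : Equiv.Perm ℕ} (ha : a ∈ youngSet l) {x : ℕ}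
    (hx : x ≤ l.sum) : a x ≤ l.sum := by
  by_contra h
  have h1 : a (a x) = a x := ha.2 (a x) (by omega)
  have := a.injective h1
  omega

lemma young_zero {l : List ℕ} {a : Equiv.Perm ℕ} (ha : a ∈ youngSet l) : a 0 = 0 := by
  have h := ha.1 0
  rw [show blockOf l 0 = 0 from (blockOf_eq_zero_iff l 0).mpr rfl] at h
  exact (blockOf_eq_zero_iff l _).mp h

/-- Restriction of a permutation to an invariant subset, extended by identity. -/
def restrictPerm (p : ℕ → Prop) [DecidablePred p] (σ : Equiv.Perm ℕ)
    (h1 : ∀ x, p x → p (σ x)) (h2 : ∀ x, p x → p (σ⁻¹ x)) : Equiv.Perm ℕ where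
  toFun x := if p x then σ x else x
  invFun x := if p x then σ⁻¹ x else x
  left_inv x := by
    by_cases hx : p x
    · simp [hx, h1 x hx]
    · simp [hx]
  right_inv x := by
    by_cases hx : p x
    · have h := h2 x hx
      rw [Equiv.Perm.inv_def] at h
      simp [hx, h]
    · simp [hx]

lemma restrictPerm_apply (p : ℕ → Prop) [DecidablePred p] (σ : Equiv.Perm ℕ)
    (h1 : ∀ x, p x → p (σ x)) (h2 : ∀ x, p x → p (σ⁻¹ x)) (x : ℕ) :
    restrictPerm p σ h1 h2 x = if p x then σ x else x := rfl

/-- `G_R(λ,α,ν) = {σ ∈ G_λ : ∃ π ∈ G_ν, σα = απ}` is the internal direct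
product of the subgroups `G_{R,i}(λ,α,ν) = G_R(λ,α,ν) ∩ G_{λ_i}`: a permutation
`σ` lies in `G_R(λ,α,ν)` iff it is the product of elements of `G_R(λ,α,ν)`
each supported on a single `λ`-block. -/
theorem stmt_17 (r : ℕ) (llam lnu : List ℕ) (hlam : llam.sum = r) (hnu : lnu.sum = r)
    (α : ℕ → ℕ) (hα0 : α 0 = 0) (hαr : ∀ x, x ≤ r → α x ≤ r) :
    ∀ σ : Equiv.Perm ℕ,
      (σ ∈ youngSet llam ∧ ∃ π ∈ youngSet lnu, ∀ x, x ≤ r → σ (α x) = α (π x)) ↔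
      (∃ g : ℕ → Equiv.Perm ℕ,
        (∀ i, i < llam.length →
          g i ∈ youngSet llam ∧
          (∃ π ∈ youngSet lnu, ∀ x, x ≤ r → (g i) (α x) = α (π x)) ∧
          ∀ x, blockOf llam x ≠ i + 1 → (g i) x = x) ∧
        σ = ((List.range llam.length).map g).prod) := by
  intro σ
  constructor
  · rintro ⟨hσ, π, hπ, hcomm⟩
    have hσinv := young_inv hσ
    have hπinv := young_inv hπ
    have hπle : ∀ x, x ≤ r → π x ≤ r := by
      intro x hx
      have := young_le hπ (x := x) (by rw [hnu]; exact hx)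
      omega
    have hπinvle : ∀ x, x ≤ r → π⁻¹ x ≤ r := by
      intro x hx
      have := young_le hπinv (x := x) (by rw [hnu]; exact hx)
      omega
    have hcomminv : ∀ x, x ≤ r → σ⁻¹ (α x) = α (π⁻¹ x) := by
      intro x hx
      have h := hcomm (π⁻¹ x) (hπinvle x hx)
      have e : π (π⁻¹ x) = x := Equiv.apply_symm_apply π x
      rw [e] at h
      have e2 : σ⁻¹ (σ (α (π⁻¹ x))) = α (π⁻¹ x) := Equiv.symm_apply_apply σ (α (π⁻¹ x))
      rw [← h, e2]
    have hg1 : ∀ i x, blockOf llam x = i + 1 → blockOf llam (σ x) = i + 1 := by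
      intro i x hx
      rw [hσ.1]; exact hx
    have hg2 : ∀ i x, blockOf llam x = i + 1 → blockOf llam (σ⁻¹ x) = i + 1 := by
      intro i x hx
      rw [hσinv.1]; exact hx
    set g : ℕ → Equiv.Perm ℕ :=
      fun i => restrictPerm (fun x => blockOf llam x = i + 1) σ (hg1 i) (hg2 i) with hgdef
    have hgapp : ∀ i x, g i x = if blockOf llam x = i + 1 then σ x else x :=
      fun i x => rfl
    refine ⟨g, fun i hi => ?_, ?_⟩
    · refine ⟨⟨fun k => ?_, fun k hk => ?_⟩, ?_, fun x hx => ?_⟩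
      · rw [hgapp]
        by_cases hb : blockOf llam k = i + 1
        · rw [if_pos hb, hσ.1]
        · rw [if_neg hb]
      · rw [hgapp, if_neg]
        rw [blockOf_of_gt llam k hk]
        omega
      · -- construct π_i
        have hp1 : ∀ x, (x ≤ r ∧ blockOf llam (α x) = i + 1) →
            (π x ≤ r ∧ blockOf llam (α (π x)) = i + 1) := by
          rintro x ⟨hx, hb⟩
          refine ⟨hπle x hx, ?_⟩
          rw [← hcomm x hx, hσ.1]
          exact hb
        have hp2 : ∀ x, (x ≤ r ∧ blockOf llam (α x) = i + 1) →
            (π⁻¹ x ≤ r ∧ blockOf llam (α (π⁻¹ x)) = i + 1) := by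
          rintro x ⟨hx, hb⟩
          refine ⟨hπinvle x hx, ?_⟩
          rw [← hcomminv x hx, hσinv.1]
          exact hb
        refine ⟨restrictPerm (fun x => x ≤ r ∧ blockOf llam (α x) = i + 1) π hp1 hp2,
          ⟨fun k => ?_, fun k hk => ?_⟩, fun x hx => ?_⟩
        · rw [restrictPerm_apply]
          by_cases hb : k ≤ r ∧ blockOf llam (α k) = i + 1
          · rw [if_pos hb, hπ.1]
          · rw [if_neg hb]
        · rw [restrictPerm_apply, if_neg]
          rw [hnu] at hk
          omega
        · rw [hgapp, restrictPerm_apply]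
          by_cases hb : blockOf llam (α x) = i + 1
          · rw [if_pos hb, if_pos ⟨hx, hb⟩]
            exact hcomm x hx
          · rw [if_neg hb, if_neg (by tauto)]
      · rw [hgapp, if_neg hx]
    · have key : ∀ m x, (((List.range m).map g).prod) x =
          if 0 < blockOf llam x ∧ blockOf llam x ≤ m then σ x else x := by
        intro m
        induction m with
        | zero =>
          intro x
          rw [if_neg (by omega)]
          simp
        | succ m ih =>
          intro x
          rw [List.range_succ, List.map_append, List.prod_append]
          simp only [List.map_cons, List.map_nil, List.prod_cons, List.prod_nil, mul_one]
          rw [Equiv.Perm.mul_apply]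
          by_cases hb : blockOf llam x = m + 1
          · rw [hgapp, if_pos hb, ih]
            have hσb : blockOf llam (σ x) = m + 1 := by rw [hσ.1]; exact hb
            rw [if_neg (by omega), if_pos (by omega)]
          · rw [hgapp, if_neg hb, ih]
            by_cases h0 : 0 < blockOf llam x ∧ blockOf llam x ≤ m
            · rw [if_pos h0, if_pos ⟨h0.1, by omega⟩]
            · rw [if_neg h0, if_neg (by omega)]
      ext x
      rw [key llam.length x]
      by_cases h0 : 0 < blockOf llam x ∧ blockOf llam x ≤ llam.length
      · rw [if_pos h0]
      · rw [if_neg h0]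
        by_cases hz : x = 0
        · subst hz
          exact young_zero hσ
        · have : ¬ (x ≤ llam.sum) := by
            intro hle
            have h1 := blockOf_le_length llam x hz hle
            have h2 : blockOf llam x ≠ 0 := by
              rw [Ne, blockOf_eq_zero_iff]; exact hz
            omega
          exact hσ.2 x (by omega)
  · rintro ⟨g, hg, rfl⟩
    have main : ∀ L : List (Equiv.Perm ℕ),
        (∀ a ∈ L, a ∈ youngSet llam ∧
          ∃ π ∈ youngSet lnu, ∀ x, x ≤ r → a (α x) = α (π x)) →
        L.prod ∈ youngSet llam ∧
          ∃ π ∈ youngSet lnu, ∀ x, x ≤ r → L.prod (α x) = α (π x) := by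
      intro L
      induction L with
      | nil =>
        intro _
        simp only [List.prod_nil]
        exact ⟨young_one llam, 1, young_one lnu, fun x hx => rfl⟩
      | cons a L ih =>
        intro h
        obtain ⟨ha, πa, hπa, hca⟩ := h a List.mem_cons_self
        obtain ⟨hL, πL, hπL, hcL⟩ := ih (fun b hb => h b (List.mem_cons_of_mem a hb))
        rw [List.prod_cons]
        refine ⟨young_mul ha hL, πa * πL, young_mul hπa hπL, fun x hx => ?_⟩
        have hπLx : πL x ≤ r := by
          have := young_le hπL (x := x) (by rw [hnu]; exact hx)
          omega
        rw [Equiv.Perm.mul_apply, hcL x hx, hca (πL x) hπLx, Equiv.Perm.mul_apply]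
    exact main _ (fun a ha => by
      obtain ⟨i, hi, rfl⟩ := List.mem_map.mp ha
      have hi' := List.mem_range.mp hi
      exact ⟨(hg i hi').1, (hg i hi').2.1⟩)
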